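/- Let (V,E,∂) be a locally finite graph. For each e ∈ E let H¹_e be a complex Hilbert space, and for each e ∈ E and endpoint v ∈ {∂₋e,∂₊e} let G_{e,v} be a complex Hilbert space and Γ_{e,v} : H¹_e → G_{e,v} a bounded linear map, with c² := sup_{e∈E} (‖Γ_{e,∂₋e}‖² + ‖Γ_{e,∂₊e}‖²) < ∞. For each v ∈ V let G_v be a closed subspace of ⊕_{e∈E_v} G_{e,v}, and write Γ_v^{ext} f := (Γ_{e,v} f_e)_{e∈E_v} for f ∈ ⊕_{e∈E} H¹_e. Define the edge-coupled space H¹ := {f ∈ ⊕_e H¹_e : Γ_v^{ext} f ∈ G_v for all v} with norm ‖f‖_{H¹} := ‖f‖_{⊕_e H¹_e} and boundary map Γ f := (Γ_v^{ext} f)_{v∈V} ∈ ⊕_v G_v, and define the vertex-edge-coupled space H̃¹ := {(f,φ) ∈ (⊕_e H¹_e) × (⊕_v G_v) : φ_v = Γ_v^{ext} f for all v} with norm ‖(f,φ)‖²_{H̃¹} := ‖f‖²_{⊕_e H¹_e} + ‖φ‖²_{⊕_v G_v} and boundary map Γ̃(f,φ) := φ. Then U¹ : f ↦ (f, (Γ_v^{ext}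 f)_{v∈V}) is a well-defined linear bijection from H¹ onto H̃¹ satisfying ‖f‖_{H¹} ≤ ‖U¹ f‖_{H̃¹} ≤ √(1 + c²)·‖f‖_{H¹} for all f ∈ H¹, and Γ̃(U¹ f) = Γ f. In particular, the vertex-edge-coupled problem with trivial vertex building blocks is equivalent to the edge-coupled problem. -/

import Mathlib

open scoped ENNReal

lemma lp2_summable {ι : Type*} {F : ι → Type*} [∀ i, NormedAddCommGroup (F i)] (g : lp F 2) :
    Summable fun i => ‖g i‖ ^ 2 := by
  have h := (lp.memℓp g).summable (p := 2) (by norm_num)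
  have h2 : ((2:ENNReal)).toReal = ((2:ℕ):ℝ) := by norm_num
  simpa [h2, Real.rpow_natCast] using h

lemma lp2_norm_sq_eq {ι : Type*} {F : ι → Type*} [∀ i, NormedAddCommGroup (F i)] (g : lp F 2) :
    ‖g‖ ^ 2 = ∑' i, ‖g i‖ ^ 2 := by
  have h := lp.norm_rpow_eq_tsum (p := 2) (by norm_num) g
  have h2 : ((2:ENNReal)).toReal = ((2:ℕ):ℝ) := by norm_num
  rw [h2] at h
  simpa [Real.rpow_natCast] using h

lemma lp2_sum_sq_le {ι : Type*} {F : ι → Type*} [∀ i, NormedAddCommGroup (F i)] (g : lp F 2)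
    (s : Finset ι) : ∑ i ∈ s, ‖g i‖ ^ 2 ≤ ‖g‖ ^ 2 := by
  have h := lp.sum_rpow_le_norm_rpow (p := 2) (by norm_num) g s
  have h2 : ((2:ENNReal)).toReal = ((2:ℕ):ℝ) := by norm_num
  rw [h2] at h
  simpa [Real.rpow_natCast] using h

lemma lp2_memℓp_of_sum_le {ι : Type*} {F : ι → Type*} [∀ i, NormedAddCommGroup (F i)]
    {g : ∀ i, F i} {C : ℝ} (h : ∀ s : Finset ι, ∑ i ∈ s, ‖g i‖ ^ 2 ≤ C) : Memℓp g 2 := by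
  apply memℓp_gen' (C := C)
  intro s
  have h2 : ((2:ENNReal)).toReal = ((2:ℕ):ℝ) := by norm_num
  rw [h2]
  simpa [Real.rpow_natCast] using h s



/-- A locally finite graph: countable vertex set `V`, countable edge set `E`,
incidence map `bd e = (∂₋e, ∂₊e)`, no loops, and finitely many edges at each vertex. -/
structure LocallyFiniteGraph (V E : Type*) [Countable V] [Countable E] where
  bd : E → V × V
  no_loops : ∀ e, (bd e).1 ≠ (bd e).2
  locFin : ∀ v : V, {e : E | (bd e).1 = v ∨ (bd e).2 = v}.Finite

/-- The collection of boundary values of `f` at a vertex `v`: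
`Γ_v^{ext} f = (Γ_{e,v} f_e)_{e ∈ E_v}` as an element of the maximal vertex boundary
space `⊕_{e∈E_v} G_{e,v}` (a finite ℓ²-direct sum). -/
noncomputable def GammaExt {V E : Type*} [Countable V] [Countable E]
    (G : LocallyFiniteGraph V E)
    (H1e : E → Type*) [∀ e, NormedAddCommGroup (H1e e)] [∀ e, InnerProductSpace ℂ (H1e e)]
    [∀ e, CompleteSpace (H1e e)]
    (Gev : E → V → Type*) [∀ e v, NormedAddCommGroup (Gev e v)]
    [∀ e v, InnerProductSpace ℂ (Gev e v)]
    (Γev : ∀ e v, H1e e →L[ℂ] Gev e v)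
    (f : lp H1e 2) (v : V) :
    PiLp 2 (fun e : {e // e ∈ (G.locFin v).toFinset} => Gev e.1 v) :=
  (WithLp.equiv 2 _).symm fun e => Γev e.1 v (f e.1)

set_option maxHeartbeats 1000000 in
/-- The vertex-edge coupling with trivial vertex building blocks is
equivalent to the edge coupling: `U¹ : f ↦ (f, (Γ_v^{ext} f)_v)` is a linear bijection
from the edge-coupled space `H¹ = {f : Γ_v^{ext} f ∈ G_v ∀v}` onto the
vertex-edge-coupled space `H̃¹ = {(f,φ) : φ_v = Γ_v^{ext} f ∀v}` with
`‖f‖ ≤ ‖U¹f‖ ≤ √(1+c²)·‖f‖` and `Γ̃(U¹f) = Γf`. -/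
theorem stmt16 {V E : Type*} [Countable V] [Countable E]
    (G : LocallyFiniteGraph V E)
    (H1e : E → Type*) [∀ e, NormedAddCommGroup (H1e e)] [∀ e, InnerProductSpace ℂ (H1e e)]
    [∀ e, CompleteSpace (H1e e)]
    (Gev : E → V → Type*) [∀ e v, NormedAddCommGroup (Gev e v)]
    [∀ e v, InnerProductSpace ℂ (Gev e v)] [∀ e v, CompleteSpace (Gev e v)]
    (Γev : ∀ e v, H1e e →L[ℂ] Gev e v)
    (c : ℝ) (hc : ∀ e, ‖Γev e (G.bd e).1‖ ^ 2 + ‖Γev e (G.bd e).2‖ ^ 2 ≤ c ^ 2)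
    (Gv : ∀ v, Submodule ℂ (PiLp 2 (fun e : {e // e ∈ (G.locFin v).toFinset} => Gev e.1 v)))
    (hGv : ∀ v, IsClosed (Gv v :
      Set (PiLp 2 (fun e : {e // e ∈ (G.locFin v).toFinset} => Gev e.1 v)))) :
    ∃ U : lp H1e 2 → WithLp 2 ((lp H1e 2) × (lp (fun v => ↥(Gv v)) 2)),
      -- `U` is well defined on `H¹` with the right components (in particular
      -- `Γ̃(U f) = (Γ_v^{ext} f)_v = Γ f`) and satisfies the two norm bounds
      (∀ f : lp H1e 2, (∀ v, GammaExt G H1e Gev Γev f v ∈ Gv v) →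
        ((WithLp.equiv 2 _) (U f)).1 = f ∧
        (∀ v, (((WithLp.equiv 2 _) (U f)).2 v :
            PiLp 2 (fun e : {e // e ∈ (G.locFin v).toFinset} => Gev e.1 v))
          = GammaExt G H1e Gev Γev f v) ∧
        ‖f‖ ≤ ‖U f‖ ∧ ‖U f‖ ≤ Real.sqrt (1 + c ^ 2) * ‖f‖) ∧
      -- `U` maps `H¹` into `H̃¹`
      (∀ f : lp H1e 2, (∀ v, GammaExt G H1e Gev Γev f v ∈ Gv v) →
        ∀ v, (((WithLp.equiv 2 _) (U f)).2 v :
            PiLp 2 (fun e : {e // e ∈ (G.locFin v).toFinset} => Gev e.1 v))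
          = GammaExt G H1e Gev Γev ((WithLp.equiv 2 _) (U f)).1 v) ∧
      -- `U` is linear on `H¹`
      (∀ f g : lp H1e 2, (∀ v, GammaExt G H1e Gev Γev f v ∈ Gv v) →
        (∀ v, GammaExt G H1e Gev Γev g v ∈ Gv v) → U (f + g) = U f + U g) ∧
      (∀ (a : ℂ) (f : lp H1e 2), (∀ v, GammaExt G H1e Gev Γev f v ∈ Gv v) →
        U (a • f) = a • U f) ∧
      -- `U` is injective on `H¹`
      (∀ f g : lp H1e 2, (∀ v, GammaExt G H1e Gev Γev f v ∈ Gv v) →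
        (∀ v, GammaExt G H1e Gev Γev g v ∈ Gv v) → U f = U g → f = g) ∧
      -- `U` is surjective from `H¹` onto `H̃¹`
      (∀ p : WithLp 2 ((lp H1e 2) × (lp (fun v => ↥(Gv v)) 2)),
        (∀ v, (((WithLp.equiv 2 _) p).2 v :
            PiLp 2 (fun e : {e // e ∈ (G.locFin v).toFinset} => Gev e.1 v))
          = GammaExt G H1e Gev Γev ((WithLp.equiv 2 _) p).1 v) →
        ∃ f : lp H1e 2, (∀ v, GammaExt G H1e Gev Γev f v ∈ Gv v) ∧ U f = p) := by
  classical
  set M : ℝ := max (c ^ 2) 0 with hM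
  have hM0 : 0 ≤ M := le_max_right _ _
  -- norm-squared formula for GammaExt
  have hnormsq : ∀ (f : lp H1e 2) (v : V),
      ‖GammaExt G H1e Gev Γev f v‖ ^ 2
        = ∑ e ∈ (G.locFin v).toFinset, ‖Γev e v (f e)‖ ^ 2 := by
    intro f v
    rw [PiLp.norm_sq_eq_of_L2]
    rw [← Finset.sum_coe_sort ((G.locFin v).toFinset) (fun e => ‖Γev e v (f e)‖ ^ 2)]
    rfl
  -- key partial-sum bound
  have key : ∀ (f : lp H1e 2) (S : Finset V),
      ∑ v ∈ S, ‖GammaExt G H1e Gev Γev f v‖ ^ 2 ≤ M * ‖f‖ ^ 2 := by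
    intro f S
    set T := S.biUnion (fun v => (G.locFin v).toFinset) with hT
    have step1 : ∀ v ∈ S, ‖GammaExt G H1e Gev Γev f v‖ ^ 2
        ≤ ∑ e ∈ T, ((if (G.bd e).1 = v then ‖Γev e (G.bd e).1 (f e)‖ ^ 2 else 0)
            + (if (G.bd e).2 = v then ‖Γev e (G.bd e).2 (f e)‖ ^ 2 else 0)) := by
      intro v hv
      rw [hnormsq f v]
      have hsub : (G.locFin v).toFinset ⊆ T := by
        rw [hT]; exact Finset.subset_biUnion_of_mem (fun v => (G.locFin v).toFinset) hv
      refine le_trans (le_of_eq (Finset.sum_congr rfl ?_))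
        (Finset.sum_le_sum_of_subset_of_nonneg hsub ?_)
      · intro e he
        rw [Set.Finite.mem_toFinset] at he
        rcases he with h1 | h2
        · have h2' : ¬ ((G.bd e).2 = v) := fun h => G.no_loops e (h1.trans h.symm)
          rw [if_pos h1, if_neg h2', add_zero, h1]
        · have h1' : ¬ ((G.bd e).1 = v) := fun h => G.no_loops e (h.trans h2.symm)
          rw [if_neg h1', if_pos h2, zero_add, h2]
      · intro e _ _
        have a1 : (0:ℝ) ≤ (if (G.bd e).1 = v then ‖Γev e (G.bd e).1 (f e)‖ ^ 2 else 0) := by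
          split_ifs <;> positivity
        have a2 : (0:ℝ) ≤ (if (G.bd e).2 = v then ‖Γev e (G.bd e).2 (f e)‖ ^ 2 else 0) := by
          split_ifs <;> positivity
        linarith
    calc ∑ v ∈ S, ‖GammaExt G H1e Gev Γev f v‖ ^ 2
        ≤ ∑ v ∈ S, ∑ e ∈ T, ((if (G.bd e).1 = v then ‖Γev e (G.bd e).1 (f e)‖ ^ 2 else 0)
            + (if (G.bd e).2 = v then ‖Γev e (G.bd e).2 (f e)‖ ^ 2 else 0)) :=
          Finset.sum_le_sum step1
      _ = ∑ e ∈ T, ∑ v ∈ S, ((if (G.bd e).1 = v then ‖Γev e (G.bd e).1 (f e)‖ ^ 2 else 0)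
            + (if (G.bd e).2 = v then ‖Γev e (G.bd e).2 (f e)‖ ^ 2 else 0)) :=
          Finset.sum_comm
      _ ≤ ∑ e ∈ T, M * ‖f e‖ ^ 2 := by
          refine Finset.sum_le_sum ?_
          intro e _
          rw [Finset.sum_add_distrib, Finset.sum_ite_eq, Finset.sum_ite_eq]
          have b1 : ‖Γev e (G.bd e).1 (f e)‖ ^ 2 ≤ ‖Γev e (G.bd e).1‖ ^ 2 * ‖f e‖ ^ 2 := by
            rw [← mul_pow]
            exact pow_le_pow_left₀ (norm_nonneg _) ((Γev e (G.bd e).1).le_opNorm _) 2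
          have b2 : ‖Γev e (G.bd e).2 (f e)‖ ^ 2 ≤ ‖Γev e (G.bd e).2‖ ^ 2 * ‖f e‖ ^ 2 := by
            rw [← mul_pow]
            exact pow_le_pow_left₀ (norm_nonneg _) ((Γev e (G.bd e).2).le_opNorm _) 2
          have c1 : (if (G.bd e).1 ∈ S then ‖Γev e (G.bd e).1 (f e)‖ ^ 2 else 0)
              ≤ ‖Γev e (G.bd e).1 (f e)‖ ^ 2 := by split_ifs with h; exact le_rfl; positivity
          have c2 : (if (G.bd e).2 ∈ S then ‖Γev e (G.bd e).2 (f e)‖ ^ 2 else 0)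
              ≤ ‖Γev e (G.bd e).2 (f e)‖ ^ 2 := by split_ifs with h; exact le_rfl; positivity
          have hM' : ‖Γev e (G.bd e).1‖ ^ 2 + ‖Γev e (G.bd e).2‖ ^ 2 ≤ M :=
            (hc e).trans (le_max_left _ _)
          nlinarith [sq_nonneg ‖f e‖]
      _ = M * ∑ e ∈ T, ‖f e‖ ^ 2 := (Finset.mul_sum _ _ _).symm
      _ ≤ M * ‖f‖ ^ 2 := mul_le_mul_of_nonneg_left (lp2_sum_sq_le f T) hM0
  -- membership in lp for the boundary data
  have hmem : ∀ (f : lp H1e 2) (hf : ∀ v, GammaExt G H1e Gev Γev f v ∈ Gv v),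
      Memℓp (fun v => (⟨GammaExt G H1e Gev Γev f v, hf v⟩ : Gv v)) 2 := by
    intro f hf
    apply lp2_memℓp_of_sum_le (C := M * ‖f‖ ^ 2)
    intro s
    exact le_trans (le_of_eq rfl) (key f s)
  set Φ : ∀ (f : lp H1e 2), (∀ v, GammaExt G H1e Gev Γev f v ∈ Gv v) →
      lp (fun v => ↥(Gv v)) 2 :=
    fun f hf => ⟨fun v => ⟨GammaExt G H1e Gev Γev f v, hf v⟩, hmem f hf⟩ with hΦ
  set U : lp H1e 2 → WithLp 2 ((lp H1e 2) × (lp (fun v => ↥(Gv v)) 2)) :=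
    fun f => if hf : ∀ v, GammaExt G H1e Gev Γev f v ∈ Gv v then
      (WithLp.equiv 2 _).symm (f, Φ f hf) else 0 with hU
  have hU1 : ∀ (f : lp H1e 2) (hf : ∀ v, GammaExt G H1e Gev Γev f v ∈ Gv v),
      ((WithLp.equiv 2 _) (U f)) = (f, Φ f hf) := by
    intro f hf
    rw [hU]
    simp only [dif_pos hf, Equiv.apply_symm_apply]
  have hGadd : ∀ (f g : lp H1e 2) (v : V), GammaExt G H1e Gev Γev (f + g) v
      = GammaExt G H1e Gev Γev f v + GammaExt G H1e Gev Γev g v := by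
    intro f g v
    refine (WithLp.ext_iff _).2 (funext fun e => ?_)
    show Γev e.1 v ((f + g) e.1) = _
    rw [lp.coeFn_add]
    simp
    rfl
  have hGsmul : ∀ (a : ℂ) (f : lp H1e 2) (v : V), GammaExt G H1e Gev Γev (a • f) v
      = a • GammaExt G H1e Gev Γev f v := by
    intro a f v
    refine (WithLp.ext_iff _).2 (funext fun e => ?_)
    show Γev e.1 v ((a • f) e.1) = _
    rw [lp.coeFn_smul]
    simp
    rfl
  refine ⟨U, ?_, ?_, ?_, ?_, ?_, ?_⟩
  · -- components and norm bounds
    intro f hf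
    have h1 := hU1 f hf
    have hUf : U f = (WithLp.equiv 2 _).symm (f, Φ f hf) := by
      rw [hU]; simp only [dif_pos hf]
    have hsq : ‖U f‖ ^ 2 = ‖f‖ ^ 2 + ‖Φ f hf‖ ^ 2 := by
      rw [hUf]; exact WithLp.prod_norm_sq_eq_of_L2 _
    have hφ2 : ‖Φ f hf‖ ^ 2 ≤ M * ‖f‖ ^ 2 := by
      rw [lp2_norm_sq_eq]
      refine Summable.tsum_le_of_sum_le (lp2_summable _) ?_
      intro s
      exact le_trans (le_of_eq rfl) (key f s)
    refine ⟨by rw [h1], by intro v; rw [h1], ?_, ?_⟩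
    · refine le_of_pow_le_pow_left₀ two_ne_zero (norm_nonneg _) ?_
      rw [hsq]
      nlinarith [sq_nonneg ‖Φ f hf‖]
    · rcases isEmpty_or_nonempty E with hE | hE
      · have hf0 : f = 0 := by
          apply Subtype.ext
          funext e
          exact isEmptyElim e
        have hnf : ‖f‖ = 0 := by rw [hf0, norm_zero]
        have hnf2 : ‖f‖ ^ 2 = 0 := by rw [hnf]; ring
        have h3 : M * ‖f‖ ^ 2 = 0 := by rw [hnf2]; ring
        rw [hnf, mul_zero]
        nlinarith [norm_nonneg (U f), hsq, hφ2, hnf2, h3]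
      · have hc2 : (0:ℝ) ≤ c ^ 2 := le_trans (by positivity) (hc (Classical.arbitrary E))
        have hMc : M = c ^ 2 := max_eq_left hc2
        refine le_of_pow_le_pow_left₀ two_ne_zero (by positivity) ?_
        rw [mul_pow, Real.sq_sqrt (by linarith), hsq]
        rw [hMc] at hφ2
        nlinarith [sq_nonneg ‖f‖]
  · intro f hf v
    rw [hU1 f hf]
  · intro f g hf hg
    have hfg : ∀ v, GammaExt G H1e Gev Γev (f + g) v ∈ Gv v := by
      intro v; rw [hGadd]; exact (Gv v).add_mem (hf v) (hg v)
    apply (WithLp.equiv 2 _).injective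
    rw [hU1 (f + g) hfg, show ∀ x y : WithLp 2 ((lp H1e 2) × (lp (fun v => ↥(Gv v)) 2)), (WithLp.equiv 2 ((lp H1e 2) × (lp (fun v => ↥(Gv v)) 2))) (x + y) = (WithLp.equiv 2 ((lp H1e 2) × (lp (fun v => ↥(Gv v)) 2))) x + (WithLp.equiv 2 ((lp H1e 2) × (lp (fun v => ↥(Gv v)) 2))) y from fun _ _ => rfl, hU1 f hf, hU1 g hg, Prod.mk_add_mk]
    refine congrArg _ ?_
    apply Subtype.ext
    rw [lp.coeFn_add]
    funext v
    apply Subtype.ext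
    show GammaExt G H1e Gev Γev (f + g) v = _
    rw [hGadd]
    rfl
  · intro a f hf
    have haf : ∀ v, GammaExt G H1e Gev Γev (a • f) v ∈ Gv v := by
      intro v; rw [hGsmul]; exact (Gv v).smul_mem a (hf v)
    apply (WithLp.equiv 2 _).injective
    rw [hU1 (a • f) haf, show ∀ x : WithLp 2 ((lp H1e 2) × (lp (fun v => ↥(Gv v)) 2)), (WithLp.equiv 2 ((lp H1e 2) × (lp (fun v => ↥(Gv v)) 2))) (a • x) = a • (WithLp.equiv 2 ((lp H1e 2) × (lp (fun v => ↥(Gv v)) 2))) x from fun _ => rfl, hU1 f hf, Prod.smul_mk]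
    refine congrArg _ ?_
    apply Subtype.ext
    rw [lp.coeFn_smul]
    funext v
    apply Subtype.ext
    show GammaExt G H1e Gev Γev (a • f) v = _
    rw [hGsmul]
    rfl
  · intro f g hf hg h
    have := congrArg (fun z => ((WithLp.equiv 2 _) z).1) h
    simpa [hU1 f hf, hU1 g hg] using this
  · intro p hp
    refine ⟨((WithLp.equiv 2 _) p).1, ?_, ?_⟩
    · intro v
      rw [← hp v]
      exact SetLike.coe_mem _
    · have hf : ∀ v, GammaExt G H1e Gev Γev ((WithLp.equiv 2 _) p).1 v ∈ Gv v := by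
        intro v; rw [← hp v]; exact SetLike.coe_mem _
      apply (WithLp.equiv 2 _).injective
      rw [hU1 _ hf]
      refine Prod.ext rfl ?_
      apply Subtype.ext
      funext v
      apply Subtype.ext
      show GammaExt G H1e Gev Γev ((WithLp.equiv 2 _) p).1 v = _
      rw [← hp v]
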